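/- Let S ∈ ℕ with S ≥ 2, and work in ℂ^{S+1} with standard basis e₀, …, e_S. Let ψ = (e₀ + e_S)/√2, and for each n ∈ {0, …, 2S−1} define the vector v_n ∈ ℂ^{S+1} with components (v_n)_k = 2^{−S/2} · √(binom(S,k)) · exp(−iπkn/S) for k = 0, …, S. Then the rank-one projector ψψ† admits the decomposition ψψ† = (1/2)·e₀e₀† + (1/2)·e_S e_S† + Σ_{n=0}^{2S−1} (−1)^n · (2^S/(4S)) · v_n v_n†. -/

import Mathlib

open scoped ComplexConjugate


/-- geometric sum of `(-exp(iπm/S))^n` over `n < 2S`. -/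
lemma geom_key (S : ℕ) (hS : 0 < S) (m : ℤ) (hm : m.natAbs ≤ S) :
    ∑ n ∈ Finset.range (2 * S),
      (-Complex.exp (((m : ℂ) * Real.pi / S) * Complex.I)) ^ n
      = if m = S ∨ m = -S then (2 * S : ℂ) else 0 := by
  have hS0 : (S : ℂ) ≠ 0 := by exact_mod_cast hS.ne'
  have hπ : (Real.pi : ℂ) ≠ 0 := by exact_mod_cast Real.pi_ne_zero
  by_cases hms : m = S ∨ m = -S
  · rw [if_pos hms]
    have hz : (-Complex.exp (((m : ℂ) * Real.pi / S) * Complex.I)) = 1 := by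
      rcases hms with h | h <;> subst h
      · rw [show ((S : ℤ) : ℂ) * Real.pi / S * Complex.I = Real.pi * Complex.I by
          push_cast; field_simp]
        rw [Complex.exp_pi_mul_I]; ring
      · rw [show ((-(S:ℤ) : ℤ) : ℂ) * Real.pi / S * Complex.I = -(Real.pi * Complex.I) by
          push_cast; field_simp]
        rw [Complex.exp_neg, Complex.exp_pi_mul_I]; norm_num
    simp [hz]
  · rw [if_neg hms]
    set z := -Complex.exp (((m : ℂ) * Real.pi / S) * Complex.I) with hzdef
    have hz1 : z ≠ 1 := by
      intro h
      have he : Complex.exp (((m : ℂ) * Real.pi / S) * Complex.I + Real.pi * Complex.I) = 1 := by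
        rw [Complex.exp_add, Complex.exp_pi_mul_I]
        have : Complex.exp (((m : ℂ) * Real.pi / S) * Complex.I) = -1 := by
          rw [hzdef] at h; linear_combination -h
        rw [this]; ring
      rw [Complex.exp_eq_one_iff] at he
      obtain ⟨k, hk⟩ := he
      have h3 : ((m : ℂ) + S) * (Real.pi * Complex.I) = (2 * k * S) * (Real.pi * Complex.I) := by
        field_simp at hk
        linear_combination (Real.pi * Complex.I) * hk
      have h4 : ((m : ℂ) + S) = 2 * k * S :=
        mul_right_cancel₀ (mul_ne_zero hπ Complex.I_ne_zero) h3
      have h5 : m + (S : ℤ) = 2 * k * S := by exact_mod_cast h4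
      have h6 : m = (2 * k - 1) * S := by linarith
      have h7 : (m.natAbs : ℤ) = |m| := Int.abs_eq_natAbs m |>.symm
      have h8 : |m| = |2 * k - 1| * S := by
        rw [h6, abs_mul]; simp
      have h9 : 1 ≤ |2 * k - 1| := Int.one_le_abs (by omega)
      have h10 : (S : ℤ) ≤ |m| := by
        rw [h8]; nlinarith [Int.ofNat_nonneg S]
      have h11 : |m| = S := le_antisymm (by rw [← h7]; exact_mod_cast hm) h10
      rcases abs_eq (by positivity : (0:ℤ) ≤ S) |>.mp h11 with h | h
      · exact hms (Or.inl h)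
      · exact hms (Or.inr h)
    rw [geom_sum_eq hz1]
    have hz2S : z ^ (2 * S) = 1 := by
      rw [hzdef, neg_pow, pow_mul, neg_one_sq, one_pow, one_mul,
        ← Complex.exp_nat_mul]
      rw [show ((2 * S : ℕ) : ℂ) * (((m : ℂ) * Real.pi / S) * Complex.I)
          = (m : ℂ) * (2 * Real.pi * Complex.I) by push_cast; field_simp]
      exact Complex.exp_int_mul_two_pi_mul_I m
    rw [hz2S]; simp


/-- The rank-one projector onto a vector. -/
def outer {d : ℕ} (v : Fin d → ℂ) : Matrix (Fin d) (Fin d) ℂ :=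
  Matrix.of fun i j => v i * conj (v j)

/-- Quasiprobability decomposition of the spin superposition state
`(|-s⟩ + |s⟩)/√2` over spin coherent states on the equator and poles of the
Poincaré sphere, with quasiprobabilities `1/2`, `1/2` and
`(-1)^n 2^S/(4S)`. Here `S = 2s ≥ 2`. -/
theorem spin_superposition_quasiprob_decomposition
    (S : ℕ) (hS : 2 ≤ S)
    (e₀ eS : Fin (S + 1) → ℂ)
    (he₀ : e₀ = fun k => if k = 0 then 1 else 0)
    (heS : eS = fun k => if k = Fin.last S then 1 else 0)
    (ψ : Fin (S + 1) → ℂ)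
    (hψ : ψ = fun k => (e₀ k + eS k) / Real.sqrt 2)
    (v : ℕ → Fin (S + 1) → ℂ)
    (hv : ∀ n, v n = fun (k : Fin (S + 1)) =>
      ((Real.sqrt (2 ^ S))⁻¹ * Real.sqrt (S.choose (k : ℕ)) : ℝ) *
        Complex.exp (-(Real.pi * (k : ℕ) * n / S : ℝ) * Complex.I)) :
    outer ψ =
      (1 / 2 : ℝ) • outer e₀ + (1 / 2 : ℝ) • outer eS +
        ∑ n ∈ Finset.range (2 * S),
          ((-1 : ℝ) ^ n * (2 ^ S / (4 * S) : ℝ)) • outer (v n) := by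
  subst he₀ heS hψ
  funext i j
  simp only [outer, Matrix.add_apply, Matrix.smul_apply, Matrix.of_apply,
    Matrix.sum_apply, Complex.real_smul]
  have hiS : (i : ℕ) ≤ S := Nat.lt_succ_iff.mp i.isLt
  have hjS : (j : ℕ) ≤ S := Nat.lt_succ_iff.mp j.isLt
  set m : ℤ := ((j : ℕ) : ℤ) - ((i : ℕ) : ℤ) with hm
  have hterm : ∀ n : ℕ,
      Complex.exp (-(Real.pi * (i : ℕ) * n / S : ℝ) * Complex.I) *
        conj (Complex.exp (-(Real.pi * (j : ℕ) * n / S : ℝ) * Complex.I))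
      = Complex.exp (((m : ℂ) * Real.pi / S) * Complex.I) ^ n := by
    intro n
    rw [← Complex.exp_conj, ← Complex.exp_nat_mul, ← Complex.exp_add]
    congr 1
    simp only [map_mul, map_neg, Complex.conj_ofReal, Complex.conj_I, hm]
    push_cast
    ring
  have hsum : ∑ n ∈ Finset.range (2 * S),
      (Complex.ofReal ((-1 : ℝ) ^ n * (2 ^ S / (4 * (S:ℝ)))) : ℂ) * (v n i * conj (v n j))
      = ((2 ^ S / (4 * (S:ℝ)) * ((Real.sqrt (2 ^ S))⁻¹ * Real.sqrt (S.choose (i:ℕ)))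
          * ((Real.sqrt (2 ^ S))⁻¹ * Real.sqrt (S.choose (j:ℕ))) : ℝ) : ℂ)
        * (if m = S ∨ m = -S then (2 * S : ℂ) else 0) := by
    rw [← geom_key S (by omega) m (by omega)]
    rw [Finset.mul_sum]
    apply Finset.sum_congr rfl
    intro n _
    rw [hv]
    simp only [map_mul, Complex.conj_ofReal]
    rw [neg_pow (Complex.exp ((m:ℂ) * Real.pi / S * Complex.I)) n]
    have ht := hterm n
    push_cast at ht ⊢
    linear_combination ((2:ℂ) ^ S / (4 * (S:ℂ)) * (((Real.sqrt (2 ^ S) : ℝ):ℂ))⁻¹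
      * ((Real.sqrt (S.choose (i:ℕ)) : ℝ):ℂ) * (((Real.sqrt (2 ^ S) : ℝ):ℂ))⁻¹
      * ((Real.sqrt (S.choose (j:ℕ)) : ℝ):ℂ) * (-1:ℂ)^n) * ht
  rw [hsum]
  have hv0 : ∀ k : Fin (S+1), k = 0 ↔ (k:ℕ) = 0 := fun k => by
    rw [Fin.ext_iff, Fin.val_zero]
  have hvl : ∀ k : Fin (S+1), k = Fin.last S ↔ (k:ℕ) = S := fun k => by
    simp [Fin.ext_iff]
  simp only [hv0 i, hv0 j, hvl i, hvl j]
  have hsq2 : Real.sqrt 2 * Real.sqrt 2 = 2 := Real.mul_self_sqrt (by norm_num)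
  have hsq2S : Real.sqrt (2^S) * Real.sqrt (2^S) = (2:ℝ)^S :=
    Real.mul_self_sqrt (by positivity)
  have hsq2ne : Real.sqrt (2^S) ≠ 0 := by positivity
  have hSne : (S:ℝ) ≠ 0 := by
    have : S ≠ 0 := by omega
    exact_mod_cast this
  have hA : ((Real.sqrt 2)⁻¹ * (Real.sqrt 2)⁻¹ : ℝ) = 1/2 := by
    rw [← mul_inv, hsq2]; norm_num
  have hB : ((Real.sqrt 2)⁻¹ * (Real.sqrt 2)⁻¹ : ℝ)
      = 2^S/(4*(S:ℝ)) * (Real.sqrt (2^S))⁻¹ * (Real.sqrt (2^S))⁻¹ * (2*(S:ℝ)) := by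
    rw [hA, mul_assoc (2^S/(4*(S:ℝ))), ← mul_inv, hsq2S]
    field_simp
    ring
  have c2 : ((Real.sqrt 2 : ℝ) : ℂ) * ((Real.sqrt 2 : ℝ) : ℂ) = 2 := by
    exact_mod_cast hsq2
  have c2S : ((Real.sqrt (2^S) : ℝ) : ℂ) * ((Real.sqrt (2^S) : ℝ) : ℂ) = (2:ℂ)^S := by
    exact_mod_cast hsq2S
  have n2S : ((Real.sqrt (2^S) : ℝ) : ℂ) ≠ 0 := by exact_mod_cast hsq2ne
  have nS' : ((S:ℕ):ℂ) ≠ 0 := Nat.cast_ne_zero.mpr (by omega)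
  push_cast at c2 c2S n2S
  have hS0 : ¬((0:ℕ) = S) := by omega
  have hS0' : ¬(S = 0) := by omega
  by_cases hi0 : (i:ℕ) = 0 <;> by_cases hil : (i:ℕ) = S <;>
    by_cases hj0 : (j:ℕ) = 0 <;> by_cases hjl : (j:ℕ) = S
  all_goals try omega
  all_goals simp only [hi0, hil, hj0, hjl, hS0, hS0', if_true, if_false,
    eq_self_iff_true, if_pos, if_neg, Nat.choose_zero_right, Nat.choose_self,
    Nat.cast_one, Real.sqrt_one, mul_one]
  all_goals (first
    | rw [if_pos (show m = (S:ℤ) ∨ m = -(S:ℤ) by omega)]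
    | rw [if_neg (show ¬(m = (S:ℤ) ∨ m = -(S:ℤ)) by omega)])
  all_goals simp only [map_zero, map_one, map_add, map_div₀, map_mul,
    Complex.conj_ofReal, mul_zero, zero_mul, mul_one, one_mul, add_zero,
    zero_add, zero_div]
  all_goals push_cast
  all_goals try norm_num
  all_goals field_simp
  all_goals first
    | exact c2.symm
    | linear_combination (4*((S:ℕ):ℂ)) * c2S - ((2:ℂ)^S*2*((S:ℕ):ℂ)) * c2
    | linear_combination (-1:ℂ) * c2
    | linear_combination 4 * c2S - 2*(2:ℂ)^S * c2
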